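/- Let G be a minimum counterexample to the statement 'every odd-hole-free graph H with Δ(H) ≥ 7 satisfies χ(H) ≤ max{Δ(H) − 1, ω(H)}', let u be a vertex of G with degree Δ(G), and let c be a proper coloring of G − u with Δ(G) − 1 colors. Then for every vertex v ∈ N(u), at most one pair of vertices of N_{G−u}(v) receives the same color under c; equivalently, the number of distinct colors assigned by c to N_{G−u}(v) is at least |N_{G−u}(v)| − 1. -/

import Mathlib

/-- `G` has an *odd hole*: an induced cycle of odd length at least 5
(a hole is an induced cycle of length at least 4, so odd holes have length at least 5). -/
def SimpleGraph.HasOddHole {V : Type*} (G : SimpleGraph V) : Prop :=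
  ∃ n : ℕ, Odd n ∧ 5 ≤ n ∧ Nonempty (SimpleGraph.cycleGraph n ↪g G)

open SimpleGraph Finset

lemma reachable_to_isolated {V : Type} {K : SimpleGraph V} {s t : V}
    (h : K.Reachable s t) (hiso : ∀ z, ¬ K.Adj z t) : s = t := by
  obtain ⟨p⟩ := h
  rcases Nat.eq_zero_or_pos p.length with h0 | h0
  · exact p.eq_of_length_eq_zero h0
  · exfalso
    have hadj := p.adj_getVert_succ (i := p.length - 1) (by omega)
    rw [show p.length - 1 + 1 = p.length by omega, p.getVert_length] at hadj
    exact hiso _ hadj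

def kswap {m : ℕ} (γ δ β : Fin m) : Fin m := if β = γ then δ else if β = δ then γ else β

def kempeGraph {V : Type} (G : SimpleGraph V) (u : V) {m : ℕ} (d : V → Fin m) (γ δ : Fin m) :
    SimpleGraph V where
  Adj x y := G.Adj x y ∧ x ≠ u ∧ y ≠ u ∧ ((d x = γ ∧ d y = δ) ∨ (d x = δ ∧ d y = γ))
  symm := ⟨by
    rintro x y ⟨h1, h2, h3, h4⟩
    exact ⟨h1.symm, h3, h2, by tauto⟩⟩
  loopless := ⟨fun x h => G.loopless.irrefl x h.1⟩

lemma kempeGraph_adj {V : Type} {G : SimpleGraph V} {u : V} {m : ℕ} {d : V → Fin m} {γ δ : Fin m}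
    {x y : V} : (kempeGraph G u d γ δ).Adj x y ↔
      G.Adj x y ∧ x ≠ u ∧ y ≠ u ∧ ((d x = γ ∧ d y = δ) ∨ (d x = δ ∧ d y = γ)) := Iff.rfl

lemma kempe_reach_colors {V : Type} {G : SimpleGraph V} {u : V} {m : ℕ} {d : V → Fin m}
    {γ δ : Fin m} {a x : V} (hda : d a = γ)
    (h : (kempeGraph G u d γ δ).Reachable a x) : d x = γ ∨ d x = δ := by
  rcases eq_or_ne x a with rfl | hxa
  · exact Or.inl hda
  obtain ⟨p⟩ := h
  rcases Nat.eq_zero_or_pos p.length with h0 | h0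
  · exact absurd (p.eq_of_length_eq_zero h0).symm hxa
  have hadj := p.adj_getVert_succ (i := p.length - 1) (by omega)
  rw [show p.length - 1 + 1 = p.length by omega, p.getVert_length] at hadj
  rcases hadj.2.2.2 with ⟨_, h2⟩ | ⟨_, h2⟩
  · exact Or.inr h2
  · exact Or.inl h2

lemma kempe_reachable {V : Type} [Fintype V] [DecidableEq V]
    (G : SimpleGraph V) (u : V) {m : ℕ}
    (hext : ∀ d : V → Fin m, (∀ x y, x ≠ u → y ≠ u → G.Adj x y → d x ≠ d y) →
       ∀ β : Fin m, ∃ x, G.Adj u x ∧ d x = β)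
    (d : V → Fin m) (hd : ∀ x y, x ≠ u → y ≠ u → G.Adj x y → d x ≠ d y)
    {γ δ : Fin m} (hγδ : γ ≠ δ) {a b : V}
    (ha : G.Adj u a) (hb : G.Adj u b)
    (hda : d a = γ) (hdb : d b = δ)
    (Hγ : ∀ x, G.Adj u x → d x = γ → x = a)
    (Hδ : ∀ x, G.Adj u x → d x = δ → (kempeGraph G u d γ δ).Reachable a x → x = b) :
    (kempeGraph G u d γ δ).Reachable a b := by
  classical
  have hswγ : kswap γ δ γ = δ := by unfold kswap; simp
  have hswδ : kswap γ δ δ = γ := by unfold kswap; simp [Ne.symm hγδ]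
  have hswinj : Function.Injective (kswap γ δ) :=
    Function.Involutive.injective (fun β => by
      unfold kswap
      by_cases h1 : β = γ
      · by_cases h2 : δ = γ <;> simp [h1, h2]
      · by_cases h2 : β = δ
        · simp [h1, h2, Ne.symm h1]
        · simp [h1, h2])
  set K := kempeGraph G u d γ δ with hK
  set d₂ : V → Fin m := fun x => if K.Reachable a x then kswap γ δ (d x) else d x with hd₂
  have hstep : ∀ x y, x ≠ u → y ≠ u → G.Adj x y → K.Reachable a x →
      (d y = γ ∨ d y = δ) → K.Reachable a y := by
    intro x y hx hy hxy hrx hcy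
    have hcx : d x = γ ∨ d x = δ := kempe_reach_colors hda hrx
    have hne : d x ≠ d y := hd x y hx hy hxy
    have hKadj : K.Adj x y := by
      rw [hK, kempeGraph_adj]
      refine ⟨hxy, hx, hy, ?_⟩
      rcases hcx with h1 | h1 <;> rcases hcy with h2 | h2 <;> rw [h1, h2] at hne ⊢ <;> tauto
    exact hrx.trans hKadj.reachable
  have hswcol : ∀ x : V, (d x = γ ∨ d x = δ) → kswap γ δ (d x) = γ ∨ kswap γ δ (d x) = δ := by
    intro x h
    rcases h with h | h <;> rw [h] <;> simp [hswγ, hswδ]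
  have hP₂ : ∀ x y, x ≠ u → y ≠ u → G.Adj x y → d₂ x ≠ d₂ y := by
    intro x y hx hy hxy
    by_cases hrx : K.Reachable a x <;> by_cases hry : K.Reachable a y
    · simp only [hd₂, if_pos hrx, if_pos hry]
      exact fun h => hd x y hx hy hxy (hswinj h)
    · simp only [hd₂, if_pos hrx, if_neg hry]
      intro h
      have hcx : d x = γ ∨ d x = δ := kempe_reach_colors hda hrx
      have hcy : d y = γ ∨ d y = δ := by rw [← h]; exact hswcol x hcx
      exact hry (hstep x y hx hy hxy hrx hcy)
    · simp only [hd₂, if_neg hrx, if_pos hry]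
      intro h
      have hcy : d y = γ ∨ d y = δ := kempe_reach_colors hda hry
      have hcx : d x = γ ∨ d x = δ := by rw [h]; exact hswcol y hcy
      exact hrx (hstep y x hy hx hxy.symm hry hcx)
    · simp only [hd₂, if_neg hrx, if_neg hry]
      exact hd x y hx hy hxy
  obtain ⟨x, hux, hx2⟩ := hext d₂ hP₂ γ
  by_cases hrx : K.Reachable a x
  · have hcx : d x = γ ∨ d x = δ := kempe_reach_colors hda hrx
    have hdx : d x = δ := by
      rcases hcx with h1 | h1
      · exfalso
        rw [hd₂] at hx2
        simp only [if_pos hrx, h1, hswγ] at hx2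
        exact hγδ hx2.symm
      · exact h1
    have := Hδ x hux hdx hrx
    subst this
    exact hrx
  · exfalso
    rw [hd₂] at hx2
    simp only [if_neg hrx] at hx2
    exact hrx (Hγ x hux hx2 ▸ Reachable.refl x)

lemma walk_length_drop {V : Type} {G : SimpleGraph V} {u v : V} (p : G.Walk u v) (n : ℕ) :
    (p.drop n).length = p.length - n := by
  induction p generalizing n with
  | nil => simp [SimpleGraph.Walk.drop]
  | cons h q ih =>
      cases n with
      | zero => simp [SimpleGraph.Walk.drop]
      | succ n =>
          simp only [SimpleGraph.Walk.drop, SimpleGraph.Walk.length_copy,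
            SimpleGraph.Walk.length_cons, ih]
          simp [SimpleGraph.Walk.drop_length]

lemma kempe_step {V : Type} [Fintype V] [DecidableEq V]
    (G : SimpleGraph V) (hfree : ¬ G.HasOddHole) (u : V) {m : ℕ}
    (hext : ∀ d : V → Fin m, (∀ x y, x ≠ u → y ≠ u → G.Adj x y → d x ≠ d y) →
       ∀ β : Fin m, ∃ x, G.Adj u x ∧ d x = β)
    (d : V → Fin m) (hd : ∀ x y, x ≠ u → y ≠ u → G.Adj x y → d x ≠ d y)
    {γ δ : Fin m} (hγδ : γ ≠ δ) {a b : V}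
    (ha : G.Adj u a) (hb : G.Adj u b)
    (hda : d a = γ) (hdb : d b = δ)
    (Hγ : ∀ x, G.Adj u x → d x = γ → x = a)
    (Hδ : ∀ x, G.Adj u x → d x = δ → (kempeGraph G u d γ δ).Reachable a x → x = b) :
    G.Adj a b := by
  classical
  by_contra hab
  have hreach := kempe_reachable G u hext d hd hγδ ha hb hda hdb Hγ Hδ
  set K := kempeGraph G u d γ δ with hK
  set L := K.dist a b with hLdef
  obtain ⟨w, hwl⟩ := hreach.exists_walk_length_eq_dist
  have hwlL : w.length = L := hwl
  have htake : ∀ i, i ≤ L → ∃ p : K.Walk a (w.getVert i), p.length = i := by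
    intro i hi
    have hrg : w.reverse.getVert (L - i) = w.getVert i := by
      rw [SimpleGraph.Walk.getVert_reverse, hwlL]
      congr 1
      omega
    refine ⟨((w.reverse.drop (L - i)).copy hrg rfl).reverse, ?_⟩
    rw [SimpleGraph.Walk.length_reverse, SimpleGraph.Walk.length_copy, walk_length_drop,
      SimpleGraph.Walk.length_reverse, hwlL]
    omega
  have hmin : ∀ p : K.Walk a b, L ≤ p.length := fun p => SimpleGraph.dist_le p
  have hkey : ∀ i j, i < j → j ≤ L → w.getVert i ≠ w.getVert j := by
    intro i j hij hj heq
    obtain ⟨tk, htk⟩ := htake i (by omega)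
    have hp : L ≤ (tk.append ((w.drop j).copy heq.symm rfl)).length := hmin _
    rw [SimpleGraph.Walk.length_append, SimpleGraph.Walk.length_copy, walk_length_drop,
      htk, hwlL] at hp
    omega
  have hinj : ∀ i j, i ≤ L → j ≤ L → w.getVert i = w.getVert j → i = j := by
    intro i j hi hj heq
    rcases lt_trichotomy i j with h | h | h
    · exact absurd heq (hkey i j h hj)
    · exact h
    · exact absurd heq.symm (hkey j i h hi)
  have hchord : ∀ i j, i + 1 < j → j ≤ L → ¬ K.Adj (w.getVert i) (w.getVert j) := by
    intro i j hij hj hadj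
    obtain ⟨tk, htk⟩ := htake i (by omega)
    have hp : L ≤ (tk.append (SimpleGraph.Walk.cons hadj (w.drop j))).length := hmin _
    rw [SimpleGraph.Walk.length_append, SimpleGraph.Walk.length_cons, walk_length_drop,
      htk, hwlL] at hp
    omega
  have halt : ∀ i, i ≤ L → d (w.getVert i) = if i % 2 = 0 then γ else δ := by
    intro i
    induction i with
    | zero => intro _; simp [SimpleGraph.Walk.getVert_zero, hda]
    | succ i ih =>
        intro h
        have hi2 := ih (by omega)
        have hKadj := w.adj_getVert_succ (i := i) (by omega)
        by_cases hp : i % 2 = 0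
        · have h1 : (i + 1) % 2 ≠ 0 := by omega
          rw [if_pos hp] at hi2
          rw [if_neg h1]
          rcases hKadj.2.2.2 with ⟨_, h2⟩ | ⟨h2, _⟩
          · exact h2
          · exact absurd (hi2.symm.trans h2) hγδ
        · have h1 : (i + 1) % 2 = 0 := by omega
          rw [if_neg hp] at hi2
          rw [if_pos h1]
          rcases hKadj.2.2.2 with ⟨h2, _⟩ | ⟨_, h2⟩
          · exact absurd (h2.symm.trans hi2) hγδ
          · exact h2
  have hcolor2 : ∀ i, i ≤ L → d (w.getVert i) = γ ∨ d (w.getVert i) = δ := by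
    intro i hi
    rw [halt i hi]
    split_ifs <;> tauto
  have hneu : ∀ i, i ≤ L → w.getVert i ≠ u := by
    intro i hi
    rcases eq_or_lt_of_le hi with rfl | hlt
    · rw [← hwlL, w.getVert_length]
      exact hb.ne'
    · exact (w.adj_getVert_succ (i := i) (by omega)).2.1
  have hLodd : L % 2 = 1 := by
    have h1 := halt L (le_refl L)
    rw [← hwlL, w.getVert_length] at h1
    by_contra h2
    rw [if_pos (by omega)] at h1
    exact hγδ (h1.symm.trans hdb)
  have hL3 : 3 ≤ L := by
    rcases Nat.lt_or_ge L 3 with h | h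
    · exfalso
      have hL1 : L = 1 := by omega
      have hKadj := w.adj_getVert_succ (i := 0) (by omega)
      rw [w.getVert_zero, show (0 + 1 : ℕ) = w.length by omega, w.getVert_length] at hKadj
      exact hab hKadj.1
    · exact h
  have hreachi : ∀ i, i ≤ L → K.Reachable a (w.getVert i) := by
    intro i hi
    obtain ⟨p, _⟩ := htake i hi
    exact ⟨p⟩
  have hu_adj : ∀ i, i ≤ L → G.Adj u (w.getVert i) → i = 0 ∨ i = L := by
    intro i hi hadj
    rcases hcolor2 i hi with hc | hc
    · left
      have := Hγ _ hadj hc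
      exact hinj i 0 hi (by omega) (by rw [this, w.getVert_zero])
    · right
      have := Hδ _ hadj hc (hreachi i hi)
      exact hinj i L hi (le_refl L) (by rw [this, ← hwlL, w.getVert_length])
  have hGnonadj : ∀ i j, i + 1 < j → j ≤ L → ¬ G.Adj (w.getVert i) (w.getVert j) := by
    intro i j hij hj hadj
    have hci := hcolor2 i (by omega)
    have hcj := hcolor2 j hj
    by_cases heqc : d (w.getVert i) = d (w.getVert j)
    · exact hd _ _ (hneu i (by omega)) (hneu j hj) hadj heqc
    · refine hchord i j hij hj ⟨hadj, hneu i (by omega), hneu j hj, ?_⟩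
      rcases hci with h1 | h1 <;> rcases hcj with h2 | h2 <;> rw [h1, h2] at heqc ⊢ <;> tauto
  have hGadj_succ : ∀ i, i < L → G.Adj (w.getVert i) (w.getVert (i + 1)) := by
    intro i hi
    exact (w.adj_getVert_succ (i := i) (by omega)).1
  -- build the embedding of the odd cycle
  set f : Fin (L + 2) → V := fun i => if i.val = 0 then u else w.getVert (i.val - 1) with hf
  have hfval : ∀ i : Fin (L + 2), i.val ≠ 0 → f i = w.getVert (i.val - 1) := by
    intro i hi; rw [hf]; exact if_neg hi
  have hf0 : ∀ i : Fin (L + 2), i.val = 0 → f i = u := by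
    intro i hi; rw [hf]; exact if_pos hi
  have hbound : ∀ i : Fin (L + 2), i.val ≠ 0 → i.val - 1 ≤ L := by
    intro i hi
    have := i.isLt
    omega
  have hinjf : Function.Injective f := by
    intro i j h
    by_cases hi : i.val = 0 <;> by_cases hj : j.val = 0
    · exact Fin.ext (by omega)
    · rw [hf0 i hi, hfval j hj] at h
      exact absurd h.symm (hneu _ (hbound j hj))
    · rw [hfval i hi, hf0 j hj] at h
      exact absurd h (hneu _ (hbound i hi))
    · rw [hfval i hi, hfval j hj] at h
      have := hinj _ _ (hbound i hi) (hbound j hj) h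
      exact Fin.ext (by omega)
  have h1sub : ∀ i j : Fin (L + 2), (i - j = 1) ↔ i.val = (j.val + 1) % (L + 2) := by
    intro i j
    rw [sub_eq_iff_eq_add, Fin.ext_iff, Fin.val_add, Fin.val_one, Nat.add_comm 1 j.val]
  have hcyc : ∀ i j : Fin (L + 2), (SimpleGraph.cycleGraph (L + 2)).Adj i j ↔
      (i.val = (j.val + 1) % (L + 2) ∨ j.val = (i.val + 1) % (L + 2)) := by
    intro i j
    rw [SimpleGraph.cycleGraph_adj, h1sub i j, h1sub j i]
  have hcase0 : ∀ i j : Fin (L + 2), i.val = 0 → j.val ≠ 0 →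
      (G.Adj (f i) (f j) ↔ (i.val = (j.val + 1) % (L + 2) ∨ j.val = (i.val + 1) % (L + 2))) := by
    intro i j hi hj
    rw [hf0 i hi, hfval j hj]
    have hjlt := j.isLt
    constructor
    · intro hadj
      rcases hu_adj _ (hbound j hj) hadj with h0 | h0
      · right
        rw [hi, Nat.mod_eq_of_lt (by omega)]
        omega
      · left
        rw [hi, show j.val + 1 = L + 2 by omega, Nat.mod_self]
    · intro hor
      rcases hor with h0 | h0
      · rw [hi] at h0
        have hj1 : j.val = L + 1 := by
          rcases Nat.lt_or_ge (j.val + 1) (L + 2) with hlt | hge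
          · rw [Nat.mod_eq_of_lt hlt] at h0; omega
          · omega
        have : j.val - 1 = L := by omega
        rw [this, ← hwlL, w.getVert_length]
        exact hb
      · rw [hi, Nat.mod_eq_of_lt (by omega)] at h0
        have : j.val - 1 = 0 := by omega
        rw [this, w.getVert_zero]
        exact ha
  have hmapiff : ∀ i j : Fin (L + 2), G.Adj (f i) (f j) ↔
      (SimpleGraph.cycleGraph (L + 2)).Adj i j := by
    intro i j
    rw [hcyc]
    by_cases hi : i.val = 0 <;> by_cases hj : j.val = 0
    · constructor
      · intro hadj
        rw [hf0 i hi, hf0 j hj] at hadj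
        exact absurd hadj (G.irrefl)
      · intro hor
        exfalso
        rw [hi, hj, Nat.mod_eq_of_lt (by omega)] at hor
        omega
    · exact hcase0 i j hi hj
    · rw [G.adj_comm, or_comm]
      exact hcase0 j i hj hi
    · rw [hfval i hi, hfval j hj]
      have hilt := i.isLt
      have hjlt := j.isLt
      constructor
      · intro hadj
        rcases lt_trichotomy (i.val - 1) (j.val - 1) with h | h | h
        · right
          have hsucc : j.val - 1 = (i.val - 1) + 1 := by
            by_contra hne
            exact hGnonadj _ _ (by omega) (hbound j hj) hadj
          rw [Nat.mod_eq_of_lt (by omega)]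
          omega
        · exfalso
          have heq : w.getVert (i.val - 1) = w.getVert (j.val - 1) := by rw [h]
          rw [heq] at hadj
          exact G.irrefl hadj
        · left
          have hsucc : i.val - 1 = (j.val - 1) + 1 := by
            by_contra hne
            exact hGnonadj _ _ (by omega) (hbound i hi) hadj.symm
          rw [Nat.mod_eq_of_lt (by omega)]
          omega
      · intro hor
        have hbi := hbound i hi
        have hbj := hbound j hj
        rcases hor with h0 | h0
        · have hplt : i.val - 1 = (j.val - 1) + 1 := by
            rcases Nat.lt_or_ge (j.val + 1) (L + 2) with hlt | hge
            · rw [Nat.mod_eq_of_lt hlt] at h0; omega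
            · rw [show j.val + 1 = L + 2 by omega, Nat.mod_self] at h0; omega
          rw [hplt]
          exact (hGadj_succ _ (by omega)).symm
        · have hqlt : j.val - 1 = (i.val - 1) + 1 := by
            rcases Nat.lt_or_ge (i.val + 1) (L + 2) with hlt | hge
            · rw [Nat.mod_eq_of_lt hlt] at h0; omega
            · rw [show i.val + 1 = L + 2 by omega, Nat.mod_self] at h0; omega
          rw [hqlt]
          exact hGadj_succ _ (by omega)
  exact hfree ⟨L + 2, Nat.odd_iff.mpr (by omega), by omega,
    ⟨⟨⟨f, hinjf⟩, fun {i j} => hmapiff i j⟩⟩⟩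


/-- In a minimum counterexample `G` to "every odd-hole-free graph `H` with
`Δ(H) ≥ 7` satisfies `χ(H) ≤ max (Δ(H) - 1) (ω(H))`", with `u` a vertex of maximum degree and
`c` a proper `(Δ(G) - 1)`-coloring of `G - u`: for every neighbour `v` of `u`, at most one
pair of vertices of `N_{G-u}(v)` share a color, i.e. the number of colors used on
`N_{G-u}(v)` is at least `|N_{G-u}(v)| - 1`. -/
theorem statement_10 {V : Type} [Fintype V] [DecidableEq V]
    (G : SimpleGraph V) [DecidableRel G.Adj]
    (hfree : ¬ G.HasOddHole) (hΔ : 7 ≤ G.maxDegree)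
    (hcex : (max (G.maxDegree - 1) G.cliqueNum : ℕ) < G.chromaticNumber)
    (hmin : ∀ (W : Type) [Fintype W] (H : SimpleGraph W) [DecidableRel H.Adj],
      Fintype.card W < Fintype.card V → ¬ H.HasOddHole → 7 ≤ H.maxDegree →
      H.chromaticNumber ≤ (max (H.maxDegree - 1) H.cliqueNum : ℕ))
    (u : V) (hu : G.degree u = G.maxDegree)
    (c : V → Fin (G.maxDegree - 1))
    (hc : ∀ v w, v ≠ u → w ≠ u → G.Adj v w → c v ≠ c w) :
    ∀ v, G.Adj u v →
      ((G.neighborFinset v).erase u).card - 1 ≤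
        (((G.neighborFinset v).erase u).image c).card := by
  classical
  intro v hadj
  by_contra hneg
  push_neg at hneg
  have hNu : (G.neighborFinset u).card = G.maxDegree := by
    rw [G.card_neighborFinset_eq_degree u, hu]
  have huNu : u ∉ G.neighborFinset u := G.notMem_neighborFinset_self u
  have hext : ∀ d : V → Fin (G.maxDegree - 1),
      (∀ x y, x ≠ u → y ≠ u → G.Adj x y → d x ≠ d y) →
      ∀ β : Fin (G.maxDegree - 1), ∃ x, G.Adj u x ∧ d x = β := by
    intro d hd β
    by_contra hcon
    push_neg at hcon
    have hcol : G.Colorable (G.maxDegree - 1) := by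
      refine ⟨SimpleGraph.Coloring.mk (fun x => if x = u then β else d x) ?_⟩
      intro x y hxy
      by_cases hx : x = u
      · have hy : y ≠ u := by
          intro h
          rw [hx, h] at hxy
          exact G.irrefl hxy
        rw [hx] at hxy
        simp only [if_pos hx, if_neg hy]
        exact fun h => hcon y hxy h.symm
      · by_cases hy : y = u
        · rw [hy] at hxy
          simp only [if_neg hx, if_pos hy]
          exact fun h => hcon x hxy.symm h
        · simp only [if_neg hx, if_neg hy]
          exact hd x y hx hy hxy
    have h1 : G.chromaticNumber ≤ ((G.maxDegree - 1 : ℕ) : ℕ∞) := hcol.chromaticNumber_le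
    have h2 : ((G.maxDegree - 1 : ℕ) : ℕ∞) ≤ ((max (G.maxDegree - 1) G.cliqueNum : ℕ) : ℕ∞) :=
      Nat.cast_le.mpr (le_max_left _ _)
    exact absurd (lt_of_le_of_lt (h1.trans h2) hcex) (lt_irrefl _)
  have hvu : v ≠ u := (G.ne_of_adj hadj).symm
  have hvNu : v ∈ G.neighborFinset u := (G.mem_neighborFinset u v).mpr hadj
  have hNvmem : ∀ x, x ∈ (G.neighborFinset v).erase u → x ≠ u ∧ G.Adj v x := by
    intro x hx
    rw [Finset.mem_erase, G.mem_neighborFinset v x] at hx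
    exact hx
  have hNvmem' : ∀ x, x ≠ u → G.Adj v x → x ∈ (G.neighborFinset v).erase u := by
    intro x hx h2
    rw [Finset.mem_erase, G.mem_neighborFinset v x]
    exact ⟨hx, h2⟩
  have hNvcard : ((G.neighborFinset v).erase u).card ≤ G.maxDegree - 1 := by
    have hdeg := G.degree_le_maxDegree v
    have hcNv : (G.neighborFinset v).card = G.degree v := G.card_neighborFinset_eq_degree v
    rw [Finset.card_erase_of_mem ((G.mem_neighborFinset v u).mpr hadj.symm), hcNv]
    omega
  have hcvimg : c v ∉ ((G.neighborFinset v).erase u).image c := by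
    rw [Finset.mem_image]
    rintro ⟨x, hx, hcx⟩
    obtain ⟨hxu, hvx⟩ := hNvmem x hx
    exact hc v x hvu hxu hvx hcx.symm
  have hMcard : 2 ≤ ((Finset.univ : Finset (Fin (G.maxDegree - 1))) \
      ((G.neighborFinset v).erase u).image c).card := by
    rw [Finset.card_sdiff_of_subset (Finset.subset_univ _), Finset.card_univ, Fintype.card_fin]
    have himgle := Finset.card_image_le (s := (G.neighborFinset v).erase u) (f := c)
    omega
  have hMmem : ∀ β : Fin (G.maxDegree - 1),
      β ∈ (Finset.univ \ ((G.neighborFinset v).erase u).image c) →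
      β ∉ ((G.neighborFinset v).erase u).image c := by
    intro β hβ
    rw [Finset.mem_sdiff] at hβ
    exact hβ.2
  have hcvM : c v ∈ (Finset.univ \ ((G.neighborFinset v).erase u).image c) := by
    rw [Finset.mem_sdiff]
    exact ⟨Finset.mem_univ _, hcvimg⟩
  obtain ⟨α, hαM'⟩ := Finset.card_pos.mp
    (show 0 < ((Finset.univ \ ((G.neighborFinset v).erase u).image c).erase (c v)).card by
      rw [Finset.card_erase_of_mem hcvM]; omega)
  have hαM := Finset.mem_of_mem_erase hαM'
  have hαne : α ≠ c v := Finset.ne_of_mem_erase hαM'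
  have hupd : ∀ β : Fin (G.maxDegree - 1),
      β ∈ (Finset.univ \ ((G.neighborFinset v).erase u).image c) →
      (∀ x y, x ≠ u → y ≠ u → G.Adj x y →
        Function.update c v β x ≠ Function.update c v β y) := by
    intro β hβ x y hx hy hxy
    by_cases hxv : x = v
    · have hyv : y ≠ v := by
        intro h
        rw [hxv, h] at hxy
        exact G.irrefl hxy
      rw [hxv, Function.update_self, Function.update_of_ne hyv]
      intro h
      rw [hxv] at hxy
      exact hMmem β hβ (Finset.mem_image.mpr ⟨y, hNvmem' y hy hxy, h.symm⟩)
    · by_cases hyv : y = v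
      · rw [hyv, Function.update_of_ne hxv, Function.update_self]
        intro h
        rw [hyv] at hxy
        exact hMmem β hβ (Finset.mem_image.mpr ⟨x, hNvmem' x hx hxy.symm, h⟩)
      · rw [Function.update_of_ne hxv, Function.update_of_ne hyv]
        exact hc x y hx hy hxy
  obtain ⟨w, hwadj, hwc⟩ := hext (Function.update c v α) (hupd α hαM) (c v)
  have hwv : w ≠ v := by
    intro h
    rw [h, Function.update_self] at hwc
    exact hαne hwc
  have hcw : c w = c v := by rwa [Function.update_of_ne hwv] at hwc
  have hwNu : w ∈ G.neighborFinset u := (G.mem_neighborFinset u w).mpr hwadj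
  have hwu : w ≠ u := fun h => huNu (h ▸ hwNu)
  have herasecard : ((G.neighborFinset u).erase v).card = G.maxDegree - 1 := by
    rw [Finset.card_erase_of_mem hvNu, hNu]
  have himgall : ((G.neighborFinset u).erase v).image c = Finset.univ := by
    rw [Finset.eq_univ_iff_forall]
    intro β
    obtain ⟨x, hux, hxc⟩ := hext c hc β
    by_cases hxv : x = v
    · refine Finset.mem_image.mpr ⟨w, Finset.mem_erase.mpr ⟨hwv, hwNu⟩, ?_⟩
      rw [hcw, ← hxc, hxv]
    · exact Finset.mem_image.mpr ⟨x, Finset.mem_erase.mpr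
        ⟨hxv, (G.mem_neighborFinset u x).mpr hux⟩, hxc⟩
  have hinj : Set.InjOn c ((G.neighborFinset u).erase v) := Finset.injOn_of_card_image_eq
    (by rw [himgall, Finset.card_univ, Fintype.card_fin, herasecard])
  have hun : ∀ x, x ∈ G.neighborFinset u → x ≠ v → ∀ y, y ∈ G.neighborFinset u → y ≠ v →
      c x = c y → x = y := by
    intro x hx hxv y hy hyv h
    exact hinj (Finset.mem_coe.mpr (Finset.mem_erase.mpr ⟨hxv, hx⟩))
      (Finset.mem_coe.mpr (Finset.mem_erase.mpr ⟨hyv, hy⟩)) h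
  have hpair : ∀ x, x ∈ G.neighborFinset u → c x = c v → x = v ∨ x = w := by
    intro x hx h
    by_cases hxv : x = v
    · exact Or.inl hxv
    · exact Or.inr (hun x hx hxv w hwNu hwv (h.trans hcw.symm))
  have hwadjall : ∀ y, y ∈ G.neighborFinset u → y ≠ v → c y ≠ c v → G.Adj w y := by
    intro y hy hyv hycv
    have hyadj : G.Adj u y := (G.mem_neighborFinset u y).mp hy
    by_cases hyα : c y = α
    · have hviso : ∀ z, ¬ (kempeGraph G u c α (c v)).Adj z v := by
        rintro z ⟨hzadj, hzu, hvu', hcol⟩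
        rcases hcol with ⟨h1, h2⟩ | ⟨h1, h2⟩
        · exact hMmem α hαM (Finset.mem_image.mpr ⟨z, hNvmem' z hzu hzadj.symm, h1⟩)
        · exact hαne h2.symm
      refine (kempe_step G hfree u hext c hc hαne hyadj hwadj hyα hcw ?_ ?_).symm
      · intro z hz hzc
        have hzv : z ≠ v := fun h => hαne ((h ▸ hzc : c v = α)).symm
        exact hun z ((G.mem_neighborFinset u z).mpr hz) hzv y hy hyv (hzc.trans hyα.symm)
      · intro z hz hzc hzr
        rcases hpair z ((G.mem_neighborFinset u z).mpr hz) hzc with h | h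
        · exfalso
          rw [h] at hzr
          exact hyv (reachable_to_isolated hzr hviso)
        · exact h
    · refine (kempe_step G hfree u hext (Function.update c v α) (hupd α hαM) hycv hyadj hwadj
        (by rw [Function.update_of_ne hyv]) (by rw [Function.update_of_ne hwv, hcw]) ?_ ?_).symm
      · intro z hz hzc
        have hzv : z ≠ v := by
          intro h
          rw [h, Function.update_self] at hzc
          exact hyα hzc.symm
        rw [Function.update_of_ne hzv] at hzc
        exact hun z ((G.mem_neighborFinset u z).mpr hz) hzv y hy hyv hzc
      · intro z hz hzc _
        have hzv : z ≠ v := by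
          intro h
          rw [h, Function.update_self] at hzc
          exact hαne hzc
        rw [Function.update_of_ne hzv] at hzc
        rcases hpair z ((G.mem_neighborFinset u z).mpr hz) hzc with h | h
        · exact absurd h hzv
        · exact h
  have hKadj2 : ∀ x, x ∈ G.neighborFinset u → x ≠ v → ∀ y, y ∈ G.neighborFinset u → y ≠ v →
      x ≠ y → c x ≠ c v → c y ≠ c v → G.Adj x y := by
    intro x hx hxv y hy hyv hxy hxcv hycv
    have hxadj : G.Adj u x := (G.mem_neighborFinset u x).mp hx
    have hyadj : G.Adj u y := (G.mem_neighborFinset u y).mp hy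
    have hcxy : c x ≠ c y := fun h => hxy (hun x hx hxv y hy hyv h)
    refine kempe_step G hfree u hext c hc hcxy hxadj hyadj rfl rfl ?_ ?_
    · intro z hz hzc
      have hzv : z ≠ v := fun h => hxcv ((h ▸ hzc : c v = c x)).symm
      exact hun z ((G.mem_neighborFinset u z).mpr hz) hzv x hx hxv hzc
    · intro z hz hzc _
      have hzv : z ≠ v := fun h => hycv ((h ▸ hzc : c v = c y)).symm
      exact hun z ((G.mem_neighborFinset u z).mpr hz) hzv y hy hyv hzc
  have hclique : G.IsClique (insert u ((G.neighborFinset u).erase v) : Finset V) := by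
    intro x hx y hy hxy
    simp only [Finset.coe_insert, Set.mem_insert_iff, Finset.mem_coe, Finset.mem_erase]
      at hx hy
    rcases hx with rfl | ⟨hxv, hxNu⟩
    · rcases hy with rfl | ⟨hyv, hyNu⟩
      · exact absurd rfl hxy
      · exact (G.mem_neighborFinset x y).mp hyNu
    · rcases hy with rfl | ⟨hyv, hyNu⟩
      · exact ((G.mem_neighborFinset y x).mp hxNu).symm
      · by_cases hxcv : c x = c v
        · rcases hpair x hxNu hxcv with h | h
          · exact absurd h hxv
          · by_cases hycv : c y = c v
            · rcases hpair y hyNu hycv with h2 | h2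
              · exact absurd h2 hyv
              · exact absurd (h.trans h2.symm) hxy
            · rw [h]
              exact hwadjall y hyNu hyv hycv
        · by_cases hycv : c y = c v
          · rcases hpair y hyNu hycv with h2 | h2
            · exact absurd h2 hyv
            · rw [h2]
              exact (hwadjall x hxNu hxv hxcv).symm
          · exact hKadj2 x hxNu hxv y hyNu hyv hxy hxcv hycv
  have hcard : (insert u ((G.neighborFinset u).erase v)).card = G.maxDegree := by
    rw [Finset.card_insert_of_notMem (fun h => huNu (Finset.mem_of_mem_erase h)),
      herasecard]
    omega
  have hclnum : G.maxDegree ≤ G.cliqueNum := by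
    have h1 := SimpleGraph.IsClique.card_le_cliqueNum (tc := hclique)
    rwa [hcard] at h1
  have hcolΔ : G.Colorable G.maxDegree := by
    have h1 : G.Colorable ((G.maxDegree - 1) + 1) := by
      refine ⟨SimpleGraph.Coloring.mk
        (fun x => if x = u then Fin.last (G.maxDegree - 1) else Fin.castSucc (c x)) ?_⟩
      intro x y hxy
      by_cases hx : x = u
      · have hy : y ≠ u := by
          intro h
          rw [hx, h] at hxy
          exact G.irrefl hxy
        simp only [if_pos hx, if_neg hy]
        exact (Fin.castSucc_lt_last (c y)).ne'
      · by_cases hy : y = u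
        · simp only [if_neg hx, if_pos hy]
          exact (Fin.castSucc_lt_last (c x)).ne
        · simp only [if_neg hx, if_neg hy]
          exact fun h => hc x y hx hy hxy (Fin.castSucc_inj.mp h)
    rwa [show (G.maxDegree - 1) + 1 = G.maxDegree by omega] at h1
  have h1 : G.chromaticNumber ≤ ((G.maxDegree : ℕ) : ℕ∞) := hcolΔ.chromaticNumber_le
  have h2 : ((G.maxDegree : ℕ) : ℕ∞) ≤ ((max (G.maxDegree - 1) G.cliqueNum : ℕ) : ℕ∞) :=
    Nat.cast_le.mpr (le_trans hclnum (le_max_right _ _))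
  exact absurd (lt_of_le_of_lt (h1.trans h2) hcex) (lt_irrefl _)
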